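/- In the Dörfler-type marking algorithm, if the cell estimators are sorted in non-increasing order and cells are marked greedily until the cumulative marked estimator exceeds C times the total, then the number of marked cells is minimal among all subsets M of cells with Σ_{E∈M} est_E² ≥ C·Σ_E est_E². -/

import Mathlib

lemma stmt_15_aux {ι : Type*} [DecidableEq ι] (e : ι → ℝ) :
    ∀ (l : List ι), l.Pairwise (fun E E' => e E' ≤ e E) → (∀ x ∈ l, 0 ≤ e x) →
    ∀ (M : Finset ι), (∀ x ∈ M, x ∈ l) →
    ∑ E ∈ M, e E ≤ ((l.take M.card).map e).sum := by
  intro l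
  induction l with
  | nil =>
    intro _ _ M hM
    have : M = ∅ := Finset.eq_empty_of_forall_notMem (fun x hx => by simpa using hM x hx)
    simp [this]
  | cons a t ih =>
    intro hs hnn M hM
    have ha : ∀ x ∈ t, e x ≤ e a := (List.pairwise_cons.mp hs).1
    have hst : t.Pairwise (fun E E' => e E' ≤ e E) := (List.pairwise_cons.mp hs).2
    have hnnt : ∀ x ∈ t, 0 ≤ e x := fun x hx => hnn x (List.mem_cons_of_mem a hx)
    by_cases haM : a ∈ M
    · have hM' : ∀ x ∈ M.erase a, x ∈ t := by
        intro x hx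
        rcases List.mem_cons.mp (hM x (Finset.mem_of_mem_erase hx)) with h | h
        · exact absurd h (Finset.ne_of_mem_erase hx)
        · exact h
      have h1 := ih hst hnnt (M.erase a) hM'
      rw [← Finset.card_erase_add_one haM, ← Finset.add_sum_erase M e haM,
        List.take_succ_cons, List.map_cons, List.sum_cons]
      linarith
    · have hMt : ∀ x ∈ M, x ∈ t := by
        intro x hx
        rcases List.mem_cons.mp (hM x hx) with h | h
        · exact absurd hx (h ▸ haM)
        · exact h
      refine (ih hst hnnt M hMt).trans ?_
      generalize M.card = k
      cases k with
      | zero => simp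
      | succ j =>
        rw [List.take_succ_cons, List.map_cons, List.sum_cons, List.take_succ,
          List.map_append, List.sum_append]
        have hb : ((t[j]?.toList).map e).sum ≤ e a := by
          cases hj : t[j]? with
          | none => simpa using hnn a List.mem_cons_self
          | some x => simpa using ha x (List.mem_of_getElem? hj)
        linarith

/-- Dörfler-type marking: if the cell estimators are sorted in non-increasing
order and cells are marked greedily until the cumulative marked estimator
reaches `C` times the total, the number of marked cells is minimal among all
subsets satisfying the Dörfler property `Σ_{E∈M} est_E² ≥ C·Σ_E est_E²`. -/
theorem stmt_15 {ι : Type*} [DecidableEq ι] (T : Finset ι) (e : ι → ℝ)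
    (he : ∀ E ∈ T, 0 ≤ e E) (htot : 0 < ∑ E ∈ T, e E)
    (C : ℝ) (hC0 : 0 < C) (hC1 : C < 1)
    (l : List ι) (hnd : l.Nodup) (hmem : ∀ x, x ∈ l ↔ x ∈ T)
    (hsort : l.Pairwise (fun E E' => e E' ≤ e E))
    (i : ℕ)
    (hi : C * ∑ E ∈ T, e E ≤ ((l.take i).map e).sum)
    (himin : ∀ j : ℕ, C * ∑ E ∈ T, e E ≤ ((l.take j).map e).sum → i ≤ j) :
    ∀ M ⊆ T, C * ∑ E ∈ T, e E ≤ ∑ E ∈ M, e E → i ≤ M.card := by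
  intro M hMT hM
  apply himin
  refine hM.trans ?_
  exact stmt_15_aux e l hsort (fun x hx => he x ((hmem x).mp hx)) M
    (fun x hx => (hmem x).mpr (hMT hx))
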